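/- Let X_1, ..., X_n be Boolean random variables such that for every subset S ⊆ {1,...,n}, Pr[∀ i ∈ S, X_i = 1] ≤ p^{|S|} for some p ∈ [0,1]. Let δ > 0 and suppose k is a natural number with k ≥ n(p + δ). Then Pr[∑ X_i ≥ k] ≤ e^{-2nδ²}. -/

import Mathlib

open MeasureTheory Real

lemma hoeffding_aux {p : ℝ} (hp0 : 0 ≤ p) (hp1 : p ≤ 1) {t : ℝ} (ht : 0 ≤ t) :
    Real.log (1 - p + p * Real.exp t) ≤ p * t + t ^ 2 / 8 := by
  set D : ℝ → ℝ := fun x => 1 - p + p * Real.exp x with hDdef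
  have hD : ∀ x, 0 < D x := by
    intro x
    rcases eq_or_lt_of_le hp0 with hp | hp
    · simp [hDdef, ← hp]
    · have := (Real.exp_pos x)
      simp only [hDdef]
      nlinarith [mul_pos hp this]
  set g : ℝ → ℝ := fun x => Real.log (D x) - p * x - x ^ 2 / 8 with hgdef
  set g' : ℝ → ℝ := fun x => p * Real.exp x / D x - p - x / 4 with hg'def
  have hDd : ∀ x, HasDerivAt D (p * Real.exp x) x := by
    intro x
    exact ((Real.hasDerivAt_exp x).const_mul p).const_add (1 - p)
  have hgd : ∀ x, HasDerivAt g (g' x) x := by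
    intro x
    have h1 : HasDerivAt (fun x => Real.log (D x)) (p * Real.exp x / D x) x :=
      (hDd x).log (hD x).ne'
    have h2 : HasDerivAt (fun x : ℝ => p * x) p x := by
      simpa using (hasDerivAt_id x).const_mul p
    have h3 : HasDerivAt (fun x : ℝ => x ^ 2 / 8) (x / 4) x := by
      have := (hasDerivAt_pow 2 x).div_const 8
      refine this.congr_deriv ?_
      ring
    exact (h1.sub h2).sub h3
  have hg'd : ∀ x, HasDerivAt g' (p * Real.exp x * (1 - p) / (D x) ^ 2 - 1 / 4) x := by
    intro x
    have h1 : HasDerivAt (fun x => p * Real.exp x / D x)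
        ((p * Real.exp x * D x - p * Real.exp x * (p * Real.exp x)) / (D x) ^ 2) x :=
      ((Real.hasDerivAt_exp x).const_mul p).div (hDd x) (hD x).ne'
    have h2 : HasDerivAt (fun x : ℝ => x / 4) (1 / 4) x := (hasDerivAt_id x).div_const 4
    have heq : (p * Real.exp x * D x - p * Real.exp x * (p * Real.exp x)) / (D x) ^ 2
        = p * Real.exp x * (1 - p) / (D x) ^ 2 := by
      simp only [hDdef]; ring
    rw [heq] at h1
    exact (h1.sub_const p).sub h2
  have hg'anti : Antitone g' := by
    apply antitone_of_hasDerivAt_nonpos hg'd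
    intro x
    have hx := Real.exp_pos x
    have key : 4 * (p * Real.exp x * (1 - p)) ≤ (D x) ^ 2 := by
      have : 0 ≤ ((1 - p) - p * Real.exp x) ^ 2 := sq_nonneg _
      simp only [hDdef]; nlinarith
    have hD2 : 0 < (D x) ^ 2 := pow_pos (hD x) 2
    have : p * Real.exp x * (1 - p) / (D x) ^ 2 ≤ 1 / 4 := by
      rw [div_le_div_iff₀ hD2 (by norm_num)]
      nlinarith
    simpa using sub_nonpos.2 this
  have hg'0 : g' 0 = 0 := by
    simp [hg'def, hDdef]
  have hganti : AntitoneOn g (Set.Ici 0) := by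
    apply antitoneOn_of_hasDerivWithinAt_nonpos (convex_Ici 0)
      (fun x _ => (hgd x).continuousAt.continuousWithinAt)
      (fun x _ => (hgd x).hasDerivWithinAt)
    intro x hx
    rw [interior_Ici] at hx
    have := hg'anti (le_of_lt hx)
    rw [hg'0] at this
    exact this
  have hg0 : g 0 = 0 := by simp [hgdef, hDdef]
  have := hganti (Set.self_mem_Ici) (Set.mem_Ici.2 ht) ht
  rw [hg0] at this
  simp only [hgdef] at this
  linarith

theorem threshold_bound
    {Ω : Type*} [Fintype Ω] [MeasurableSpace Ω] [MeasurableSingletonClass Ω]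
    (μ : Measure Ω) [IsProbabilityMeasure μ] (n : ℕ)
    (X : Fin n → Ω → ℕ) (hX : ∀ i ω, X i ω = 0 ∨ X i ω = 1)
    (p : ℝ) (hp0 : 0 ≤ p) (hp1 : p ≤ 1)
    (h : ∀ S : Finset (Fin n),
      (μ {ω | ∀ i ∈ S, X i ω = 1}).toReal ≤ p ^ S.card)
    (δ : ℝ) (hδ : 0 < δ) (k : ℕ) (hk : (n : ℝ) * (p + δ) ≤ k) :
    (μ {ω | k ≤ ∑ i, X i ω}).toReal ≤ Real.exp (-2 * n * δ ^ 2) := by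
  classical
  set t : ℝ := 4 * δ with htdef
  have ht : 0 ≤ t := by positivity
  set c : ℝ := Real.exp t - 1 with hcdef
  have hc : 0 ≤ c := by
    have := Real.one_le_exp ht
    simp [hcdef]; linarith
  set P : Ω → ℝ := fun ω => (μ {ω}).toReal with hPdef
  have hP0 : ∀ ω, 0 ≤ P ω := fun ω => ENNReal.toReal_nonneg
  -- measure of a set as a finite sum
  have hmeas : ∀ A : Set Ω, (μ A).toReal = ∑ ω ∈ Finset.univ.filter (· ∈ A), P ω := by
    intro A
    have hA : A = ⋃ ω ∈ Finset.univ.filter (· ∈ A), ({ω} : Set Ω) := by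
      ext x; simp
    have hμ : μ A = ∑ ω ∈ Finset.univ.filter (· ∈ A), μ {ω} := by
      conv_lhs => rw [hA]
      apply measure_biUnion_finset ?_ (fun b _ => measurableSet_singleton b)
      intro x _ y _ hxy
      simp only [Function.onFun, Set.disjoint_singleton]
      exact hxy
    rw [hμ]
    exact ENNReal.toReal_sum (fun ω _ => measure_ne_top μ _)
  set E : ℝ := ∑ ω : Ω, P ω * Real.exp (t * (∑ i, X i ω : ℕ)) with hEdef
  -- Markov step
  have step1 : (μ {ω | k ≤ ∑ i, X i ω}).toReal * Real.exp (t * k) ≤ E := by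
    rw [hmeas, Finset.sum_mul]
    apply le_trans (Finset.sum_le_sum ?_)
      (Finset.sum_le_sum_of_subset_of_nonneg (Finset.subset_univ _) ?_)
    · intro ω hω
      simp only [Finset.mem_filter, Set.mem_setOf_eq] at hω
      apply mul_le_mul_of_nonneg_left _ (hP0 ω)
      apply Real.exp_le_exp.2
      apply mul_le_mul_of_nonneg_left _ ht
      exact_mod_cast hω.2
    · intro ω _ _
      exact mul_nonneg (hP0 ω) (Real.exp_pos _).le
  -- pointwise expansion of the exponential
  have expand : ∀ ω : Ω, Real.exp (t * (∑ i, X i ω : ℕ))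
      = ∑ S ∈ (Finset.univ : Finset (Fin n)).powerset,
          c ^ S.card * ∏ i ∈ S, (X i ω : ℝ) := by
    intro ω
    have h1 : Real.exp (t * (∑ i, X i ω : ℕ)) = ∏ i : Fin n, (c * (X i ω : ℝ) + 1) := by
      push_cast
      rw [Finset.mul_sum, Real.exp_sum]
      apply Finset.prod_congr rfl
      intro i _
      rcases hX i ω with h0 | h1
      · simp [h0]
      · simp [h1, hcdef]
    rw [h1, Finset.prod_add]
    apply Finset.sum_congr rfl
    intro S _
    rw [Finset.prod_const_one, mul_one, Finset.prod_mul_distrib, Finset.prod_const]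
  -- identify the subset sums with measures
  have subsum : ∀ S : Finset (Fin n),
      (∑ ω : Ω, P ω * ∏ i ∈ S, (X i ω : ℝ)) = (μ {ω | ∀ i ∈ S, X i ω = 1}).toReal := by
    intro S
    rw [hmeas, Finset.sum_filter]
    apply Finset.sum_congr rfl
    intro ω _
    simp only [Set.mem_setOf_eq]
    by_cases hall : ∀ i ∈ S, X i ω = 1
    · rw [if_pos hall, Finset.prod_eq_one (fun i hi => by simp [hall i hi]), mul_one]
    · rw [if_neg hall]
      push_neg at hall
      obtain ⟨i, hiS, hi1⟩ := hall
      have h0 : X i ω = 0 := (hX i ω).resolve_right hi1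
      rw [Finset.prod_eq_zero hiS (by rw [h0]; norm_num), mul_zero]
  -- bound E
  have step2 : E ≤ (c * p + 1) ^ n := by
    have hE2 : E = ∑ S ∈ (Finset.univ : Finset (Fin n)).powerset,
        c ^ S.card * (μ {ω | ∀ i ∈ S, X i ω = 1}).toReal := by
      rw [hEdef]
      simp_rw [expand, Finset.mul_sum]
      rw [Finset.sum_comm]
      apply Finset.sum_congr rfl
      intro S _
      rw [← subsum S, Finset.mul_sum]
      apply Finset.sum_congr rfl
      intro ω _
      ring
    rw [hE2]
    have hrhs : (c * p + 1) ^ n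
        = ∑ S ∈ (Finset.univ : Finset (Fin n)).powerset, c ^ S.card * p ^ S.card := by
      have := Finset.prod_add (fun _ : Fin n => c * p) (fun _ => (1 : ℝ)) Finset.univ
      simp only [Finset.prod_const, Finset.prod_const_one, one_pow, mul_one, mul_pow,
        Finset.card_univ, Fintype.card_fin] at this
      exact this
    rw [hrhs]
    apply Finset.sum_le_sum
    intro S _
    exact mul_le_mul_of_nonneg_left (le_trans (h S) (le_refl _)) (pow_nonneg hc _)
  -- final analytic bound
  have hcp1 : (0 : ℝ) < c * p + 1 := by nlinarith [mul_nonneg hc hp0]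
  have step3 : (c * p + 1) ^ n ≤ Real.exp ((n : ℝ) * (p * t + t ^ 2 / 8)) := by
    have hlog : Real.log (c * p + 1) ≤ p * t + t ^ 2 / 8 := by
      have heq : c * p + 1 = 1 - p + p * Real.exp t := by rw [hcdef]; ring
      rw [heq]
      exact hoeffding_aux hp0 hp1 ht
    calc (c * p + 1) ^ n = Real.exp ((n : ℝ) * Real.log (c * p + 1)) := by
          rw [Real.exp_nat_mul, Real.exp_log hcp1]
      _ ≤ _ := by
          apply Real.exp_le_exp.2
          exact mul_le_mul_of_nonneg_left hlog (Nat.cast_nonneg n)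
  have hexp : (0 : ℝ) < Real.exp (t * k) := Real.exp_pos _
  have final : (μ {ω | k ≤ ∑ i, X i ω}).toReal ≤
      Real.exp ((n : ℝ) * (p * t + t ^ 2 / 8)) / Real.exp (t * k) := by
    rw [le_div_iff₀ hexp]
    exact le_trans step1 (le_trans step2 step3)
  apply le_trans final
  rw [← Real.exp_sub, Real.exp_le_exp]
  have hkt : t * ((n : ℝ) * (p + δ)) ≤ t * k := mul_le_mul_of_nonneg_left hk ht
  rw [htdef]
  nlinarith [Nat.cast_nonneg (α := ℝ) n, sq_nonneg δ]
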